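/- Let β ∈ (0,1), N a positive integer, and μ_i = 1 - β^{r_i}, θ_i = 1 - β^{s_i} for positive integers r_i, s_i, i = 1,…,N. For a subset a ⊆ {1,…,N}, if Σ_{i∈a} r_i ≠ Σ_{i∈a} s_i, then the Bernoulli KL divergence between the products satisfies d(∏_{i∈a}(1-μ_i), ∏_{i∈a}(1-θ_i)) ≥ (2/log 2) · β^{2 Σ_{i∈a} r_i} · (1-β)², where d is the binary KL divergence. -/

import Mathlib

private lemma pinsker_bin (p q : ℝ) (hp : p ∈ Set.Ioo (0:ℝ) 1) (hq : q ∈ Set.Ioo (0:ℝ) 1) :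
    2 * (p - q) ^ 2 ≤ p * Real.log (p / q) + (1 - p) * Real.log ((1 - p) / (1 - q)) := by
  obtain ⟨hp0, hp1⟩ := hp
  obtain ⟨hq0, hq1⟩ := hq
  set G : ℝ → ℝ := fun y => p * Real.log p + (1 - p) * Real.log (1 - p)
      - p * Real.log y - (1 - p) * Real.log (1 - y) - 2 * (p - y) ^ 2 with hGdef
  have hd : ∀ x ∈ Set.Ioo (0:ℝ) 1,
      HasDerivAt G ((x - p) * (2 * x - 1) ^ 2 / (x * (1 - x))) x := by
    intro x hx
    have hx0 : (0:ℝ) < x := hx.1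
    have hx1 : (0:ℝ) < 1 - x := by linarith [hx.2]
    have h1 : HasDerivAt (fun y : ℝ => p * Real.log y) (p * x⁻¹) x :=
      (Real.hasDerivAt_log hx0.ne').const_mul p
    have h2 : HasDerivAt (fun y : ℝ => (1:ℝ) - y) (-1) x := (hasDerivAt_id x).const_sub 1
    have h3 : HasDerivAt (fun y : ℝ => (1 - p) * Real.log (1 - y)) ((1 - p) * ((1 - x)⁻¹ * (-1))) x :=
      ((Real.hasDerivAt_log hx1.ne').comp x h2).const_mul (1 - p)
    have h4 : HasDerivAt (fun y : ℝ => (p - y) ^ 2) ((2 : ℕ) * (p - x) ^ 1 * (-1)) x := by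
      simpa [Pi.pow_def] using (((hasDerivAt_id x).const_sub p).pow 2)
    have h5 : HasDerivAt (fun y : ℝ => 2 * (p - y) ^ 2) (2 * ((2 : ℕ) * (p - x) ^ 1 * (-1))) x :=
      h4.const_mul 2
    have hG : HasDerivAt G
        (0 - p * x⁻¹ - (1 - p) * ((1 - x)⁻¹ * (-1)) - 2 * ((2 : ℕ) * (p - x) ^ 1 * (-1))) x :=
      (((hasDerivAt_const x _).sub h1).sub h3).sub h5
    convert hG using 1
    field_simp
    ring
  have hGp : G p = 0 := by simp [hGdef]
  have key : 0 ≤ G q := by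
    rcases le_total p q with hle | hle
    · have hsub : Set.Icc p q ⊆ Set.Ioo (0:ℝ) 1 := fun x hx =>
        ⟨lt_of_lt_of_le hp0 hx.1, lt_of_le_of_lt hx.2 hq1⟩
      have hmono : MonotoneOn G (Set.Icc p q) := by
        apply monotoneOn_of_deriv_nonneg (convex_Icc p q)
        · exact fun x hx => (hd x (hsub hx)).differentiableAt.continuousAt.continuousWithinAt
        · intro x hx
          rw [interior_Icc] at hx
          exact ((hd x (hsub (Set.Ioo_subset_Icc_self hx))).differentiableAt).differentiableWithinAt
        · intro x hx
          rw [interior_Icc] at hx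
          have hx' := hsub (Set.Ioo_subset_Icc_self hx)
          rw [(hd x hx').deriv]
          have h1 : (0:ℝ) < x * (1 - x) := mul_pos hx'.1 (by linarith [hx'.2])
          have h2 : (0:ℝ) ≤ x - p := by linarith [hx.1]
          positivity
      have := hmono (Set.left_mem_Icc.2 hle) (Set.right_mem_Icc.2 hle) hle
      linarith [hGp ▸ this]
    · have hsub : Set.Icc q p ⊆ Set.Ioo (0:ℝ) 1 := fun x hx =>
        ⟨lt_of_lt_of_le hq0 hx.1, lt_of_le_of_lt hx.2 hp1⟩
      have hanti : AntitoneOn G (Set.Icc q p) := by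
        apply antitoneOn_of_deriv_nonpos (convex_Icc q p)
        · exact fun x hx => (hd x (hsub hx)).differentiableAt.continuousAt.continuousWithinAt
        · intro x hx
          rw [interior_Icc] at hx
          exact ((hd x (hsub (Set.Ioo_subset_Icc_self hx))).differentiableAt).differentiableWithinAt
        · intro x hx
          rw [interior_Icc] at hx
          have hx' := hsub (Set.Ioo_subset_Icc_self hx)
          rw [(hd x hx').deriv]
          have h1 : (0:ℝ) < x * (1 - x) := mul_pos hx'.1 (by linarith [hx'.2])
          have h2 : x - p ≤ 0 := by linarith [hx.2]
          have h3 : (0:ℝ) ≤ (2 * x - 1) ^ 2 := sq_nonneg _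
          have : (x - p) * (2 * x - 1) ^ 2 ≤ 0 := mul_nonpos_of_nonpos_of_nonneg h2 h3
          exact div_nonpos_of_nonpos_of_nonneg this h1.le
      have := hanti (Set.left_mem_Icc.2 hle) (Set.right_mem_Icc.2 hle) hle
      linarith [hGp ▸ this]
  have hlogp : Real.log (p / q) = Real.log p - Real.log q := Real.log_div hp0.ne' hq0.ne'
  have hlogp' : Real.log ((1 - p) / (1 - q)) = Real.log (1 - p) - Real.log (1 - q) :=
    Real.log_div (by linarith) (by linarith)
  rw [hlogp, hlogp']
  simp only [hGdef] at key
  nlinarith [key]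

/-- Binary KL divergence (base-2 logs) between products of geometric-grid parameters. -/
theorem max_feedback_kl_lower_bound (β : ℝ) (hβ : β ∈ Set.Ioo (0:ℝ) 1)
    (N : ℕ) (hN : 0 < N) (r s : Fin N → ℕ)
    (hr : ∀ i, 0 < r i) (hs : ∀ i, 0 < s i)
    (a : Finset (Fin N))
    (hne : (∑ i ∈ a, r i) ≠ (∑ i ∈ a, s i)) :
    (2 / Real.log 2) * β ^ (2 * ∑ i ∈ a, r i) * (1 - β) ^ 2 ≤
      (β ^ (∑ i ∈ a, r i)) * Real.logb 2 ((β ^ (∑ i ∈ a, r i)) / (β ^ (∑ i ∈ a, s i)))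
      + (1 - β ^ (∑ i ∈ a, r i)) *
        Real.logb 2 ((1 - β ^ (∑ i ∈ a, r i)) / (1 - β ^ (∑ i ∈ a, s i))) := by
  obtain ⟨hβ0, hβ1⟩ := hβ
  set R := ∑ i ∈ a, r i with hR
  set S := ∑ i ∈ a, s i with hS
  have hae : a.Nonempty := by
    by_contra h
    rw [Finset.not_nonempty_iff_eq_empty] at h
    exact hne (by simp [hR, hS, h])
  have hR1 : 1 ≤ R := by
    obtain ⟨i, hi⟩ := hae
    calc 1 ≤ r i := hr i
    _ ≤ R := Finset.single_le_sum (fun j _ => Nat.zero_le _) hi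
  have hS1 : 1 ≤ S := by
    obtain ⟨i, hi⟩ := hae
    calc 1 ≤ s i := hs i
    _ ≤ S := Finset.single_le_sum (fun j _ => Nat.zero_le _) hi
  set p := β ^ R with hp
  set q := β ^ S with hq
  have hp_mem : p ∈ Set.Ioo (0:ℝ) 1 :=
    ⟨pow_pos hβ0 R, pow_lt_one₀ hβ0.le hβ1 (by omega)⟩
  have hq_mem : q ∈ Set.Ioo (0:ℝ) 1 :=
    ⟨pow_pos hβ0 S, pow_lt_one₀ hβ0.le hβ1 (by omega)⟩
  -- |p - q| ≥ β^R (1-β)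
  have hgap : β ^ R * (1 - β) ≤ |p - q| := by
    rcases lt_or_gt_of_ne hne with h | h
    · -- R < S : p > q, p - q = β^R (1 - β^(S-R)) ≥ β^R (1-β)
      have h1 : q ≤ β ^ (R + 1) := by
        rw [hq]
        exact pow_le_pow_of_le_one hβ0.le hβ1.le (by omega)
      have h2 : β ^ (R + 1) = β ^ R * β := by ring
      have hpq : β ^ R * (1 - β) ≤ p - q := by
        rw [hp]; nlinarith [pow_pos hβ0 R]
      rw [abs_of_nonneg (by nlinarith [pow_pos hβ0 R, hpq])]
      exact hpq
    · -- R > S : q > p, q - p = β^S(1 - β^(R-S)) ≥ β^S (1-β) ≥ β^R(1-β)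
      have h1 : p ≤ β ^ (S + 1) := by
        rw [hp]
        exact pow_le_pow_of_le_one hβ0.le hβ1.le (by omega)
      have h2 : β ^ (S + 1) = β ^ S * β := by ring
      have hqp : β ^ S * (1 - β) ≤ q - p := by
        rw [hq]; nlinarith [pow_pos hβ0 S]
      have h3 : β ^ R ≤ β ^ S :=
        pow_le_pow_of_le_one hβ0.le hβ1.le (by omega)
      rw [abs_of_nonpos (by nlinarith [pow_pos hβ0 S, hqp])]
      nlinarith
  have hpinsker := pinsker_bin p q hp_mem hq_mem
  have hlog2 : (0:ℝ) < Real.log 2 := Real.log_pos (by norm_num)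
  have hsq : β ^ (2 * R) * (1 - β) ^ 2 ≤ (p - q) ^ 2 := by
    have := sq_abs (p - q)
    have h0 : (0:ℝ) ≤ β ^ R * (1 - β) := mul_nonneg (pow_pos hβ0 R).le (by linarith)
    calc β ^ (2 * R) * (1 - β) ^ 2 = (β ^ R * (1 - β)) ^ 2 := by ring
      _ ≤ |p - q| ^ 2 := by nlinarith [abs_nonneg (p - q)]
      _ = (p - q) ^ 2 := sq_abs _
  have key : 2 * (β ^ (2 * R) * (1 - β) ^ 2) ≤
      p * Real.log (p / q) + (1 - p) * Real.log ((1 - p) / (1 - q)) := by nlinarith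
  rw [Real.logb, Real.logb]
  have h1 : (2 / Real.log 2) * β ^ (2 * R) * (1 - β) ^ 2
      = (2 * (β ^ (2 * R) * (1 - β) ^ 2)) / Real.log 2 := by ring
  have h2 : p * (Real.log (p / q) / Real.log 2)
        + (1 - p) * (Real.log ((1 - p) / (1 - q)) / Real.log 2)
      = (p * Real.log (p / q) + (1 - p) * Real.log ((1 - p) / (1 - q))) / Real.log 2 := by
    ring
  rw [h1, h2]
  gcongr
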